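/- Under the same setting as the coupled projected recursions (x_0 ∈ X, y_0 ∈ Y, constant step sizes α, β > 0, arbitrary noise sequences, U_Xᵀ A_ff U_X invertible with c1 := U_X (U_Xᵀ A_ff U_X)^{-1} U_Xᵀ, and (x_p*, y_p*) ∈ X × Y the constrained solution satisfying Π_X(A_ff x_p* + A_fs y_p* − b1) = 0 and Π_Y(A_sf x_p* + A_ss y_p* − b2) = 0), for every T ≥ 1 the Polyak–Ruppert average of the fast iterate satisfies the exact identity x̄_T − x_p* = (c1/T)((x_T − x_0)/α − Π_X ε̄_T) − c1 A_fs (ȳ_T − y_p*), where x̄_T := (1/T)Σ_{t=0}^{T−1} x_t, ȳ_T := (1/T)Σ_{t=0}^{T−1} y_t, and ε̄_T := Σ_{t=0}^{T−1} ε_t. -/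

import Mathlib

open Matrix MeasureTheory Finset
open scoped BigOperators

noncomputable section
namespace TTSA

abbrev E (n : ℕ) : Type := EuclideanSpace ℝ (Fin n)

def mv {k l : ℕ} (M : Matrix (Fin k) (Fin l) ℝ) (x : E l) : E k :=
  Matrix.toEuclideanLin M x

def specNorm {k l : ℕ} (M : Matrix (Fin k) (Fin l) ℝ) : ℝ :=
  ‖LinearMap.toContinuousLinearMap (Matrix.toEuclideanLin M)‖

def sigmaMin {k : ℕ} (M : Matrix (Fin k) (Fin k) ℝ) : ℝ :=
  sInf ((fun v : E k => ‖mv M v‖) '' {v | ‖v‖ = 1})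

def resolvent {k l : ℕ} (U : Matrix (Fin k) (Fin l) ℝ) (A : Matrix (Fin k) (Fin k) ℝ) :
    Matrix (Fin k) (Fin k) ℝ :=
  U * (Uᵀ * A * U)⁻¹ * Uᵀ

lemma mv_mul {k l p : ℕ} (M : Matrix (Fin k) (Fin l) ℝ) (N : Matrix (Fin l) (Fin p) ℝ)
    (v : E p) : mv (M * N) v = mv M (mv N v) := by
  simp [mv, Matrix.toEuclideanLin_apply, Matrix.mulVec_mulVec]

lemma mv_add {k l : ℕ} (M : Matrix (Fin k) (Fin l) ℝ) (u v : E l) :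
    mv M (u + v) = mv M u + mv M v := map_add (Matrix.toEuclideanLin M) u v

lemma mv_sub {k l : ℕ} (M : Matrix (Fin k) (Fin l) ℝ) (u v : E l) :
    mv M (u - v) = mv M u - mv M v := map_sub (Matrix.toEuclideanLin M) u v

lemma mv_smul {k l : ℕ} (M : Matrix (Fin k) (Fin l) ℝ) (c : ℝ) (v : E l) :
    mv M (c • v) = c • mv M v := map_smul (Matrix.toEuclideanLin M) c v

lemma mv_sum {k l : ℕ} (M : Matrix (Fin k) (Fin l) ℝ) (T : ℕ) (f : ℕ → E l) :
    mv M (∑ t ∈ Finset.range T, f t) = ∑ t ∈ Finset.range T, mv M (f t) :=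
  map_sum (Matrix.toEuclideanLin M) f (Finset.range T)

/-- exact identity for the fast Polyak–Ruppert average around the
constrained solution, with `c1 = resolvent U_X A_ff`. -/
theorem fast_average_exact_identity {n m d r : ℕ}
    (Aff : Matrix (Fin n) (Fin n) ℝ) (Afs : Matrix (Fin n) (Fin m) ℝ)
    (Asf : Matrix (Fin m) (Fin n) ℝ) (Ass : Matrix (Fin m) (Fin m) ℝ)
    (b1 : E n) (b2 : E m)
    (UX : Matrix (Fin n) (Fin d) ℝ) (UY : Matrix (Fin m) (Fin r) ℝ)
    (hUX : UXᵀ * UX = 1) (hUY : UYᵀ * UY = 1)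
    (α β : ℝ) (hα : 0 < α) (hβ : 0 < β)
    (x : ℕ → E n) (y : ℕ → E m) (ε : ℕ → E n) (ψ : ℕ → E m)
    (hx0 : x 0 ∈ Set.range (mv UX)) (hy0 : y 0 ∈ Set.range (mv UY))
    (hrecx : ∀ t : ℕ, x (t + 1) =
      mv (UX * UXᵀ) (x t + α • (mv Aff (x t) + mv Afs (y t) - b1 + ε t)))
    (hrecy : ∀ t : ℕ, y (t + 1) =
      mv (UY * UYᵀ) (y t + β • (mv Asf (x t) + mv Ass (y t) - b2 + ψ t)))
    (h1 : IsUnit (UXᵀ * Aff * UX))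
    (xp : E n) (yp : E m)
    (hxp : xp ∈ Set.range (mv UX)) (hyp : yp ∈ Set.range (mv UY))
    (hsolx : mv (UX * UXᵀ) (mv Aff xp + mv Afs yp - b1) = 0)
    (hsoly : mv (UY * UYᵀ) (mv Asf xp + mv Ass yp - b2) = 0) :
    ∀ T : ℕ, 1 ≤ T →
      (T : ℝ)⁻¹ • (∑ t ∈ Finset.range T, x t) - xp =
      (T : ℝ)⁻¹ • mv (resolvent UX Aff)
          (α⁻¹ • (x T - x 0) - mv (UX * UXᵀ) (∑ t ∈ Finset.range T, ε t)) -
      mv (resolvent UX Aff * Afs)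
        ((T : ℝ)⁻¹ • (∑ t ∈ Finset.range T, y t) - yp) := by
  intro T hT
  set N : Matrix (Fin d) (Fin d) ℝ := (UXᵀ * Aff * UX)⁻¹ with hNdef
  have hc1 : resolvent UX Aff = UX * N * UXᵀ := rfl
  have hinv : N * (UXᵀ * Aff * UX) = 1 :=
    Matrix.nonsing_inv_mul _ ((Matrix.isUnit_iff_isUnit_det _).mp h1)
  -- matrix identities
  have hc1P : UX * N * UXᵀ * (UX * UXᵀ) = UX * N * UXᵀ := by
    calc UX * N * UXᵀ * (UX * UXᵀ) = UX * N * ((UXᵀ * UX) * UXᵀ) := by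
          simp only [Matrix.mul_assoc]
      _ = UX * N * UXᵀ := by rw [hUX, Matrix.one_mul]
  have hinv' : N * (UXᵀ * (Aff * UX)) = 1 := by rw [← Matrix.mul_assoc UXᵀ Aff UX]; exact hinv
  have h2 : UX * N * UXᵀ * Aff * UX = UX := by
    calc UX * N * UXᵀ * Aff * UX = UX * (N * (UXᵀ * (Aff * UX))) := by
          simp only [Matrix.mul_assoc]
      _ = UX := by rw [hinv', Matrix.mul_one]
  have hPUX : (UX * UXᵀ) * UX = UX := by
    rw [Matrix.mul_assoc, hUX, Matrix.mul_one]
  -- submodule of X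
  set S : Submodule ℝ (E n) := LinearMap.range (Matrix.toEuclideanLin UX) with hSdef
  have hfix : ∀ v ∈ S, mv (UX * UXᵀ) v = v := by
    rintro _ ⟨w, rfl⟩
    show mv (UX * UXᵀ) (mv UX w) = mv UX w
    rw [← mv_mul, hPUX]
  have hmem : ∀ t, x t ∈ S := by
    intro t
    cases t with
    | zero => obtain ⟨w, hw⟩ := hx0; exact ⟨w, hw⟩
    | succ t => rw [hrecx t, mv_mul]; exact ⟨_, rfl⟩
  have hxpS : xp ∈ S := by obtain ⟨w, hw⟩ := hxp; exact ⟨w, hw⟩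
  -- key resolvent identity on S
  have hkey : ∀ v ∈ S, mv (UX * N * UXᵀ) (mv (UX * UXᵀ) (mv Aff v)) = v := by
    rintro _ ⟨w, rfl⟩
    show mv (UX * N * UXᵀ) (mv (UX * UXᵀ) (mv Aff (mv UX w))) = mv UX w
    rw [← mv_mul, ← mv_mul, ← mv_mul, hc1P, h2]
  -- telescoping
  have hstep : ∀ t, x (t + 1) - x t
      = α • mv (UX * UXᵀ) (mv Aff (x t) + mv Afs (y t) - b1 + ε t) := by
    intro t
    rw [hrecx t, mv_add, mv_smul, hfix (x t) (hmem t)]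
    abel
  have hT0 : x T - x 0 = α • mv (UX * UXᵀ)
      (mv Aff (∑ t ∈ Finset.range T, x t) + mv Afs (∑ t ∈ Finset.range T, y t)
        - (T : ℝ) • b1 + (∑ t ∈ Finset.range T, ε t)) := by
    calc x T - x 0 = ∑ t ∈ Finset.range T, (x (t + 1) - x t) :=
          (Finset.sum_range_sub x T).symm
      _ = ∑ t ∈ Finset.range T,
            α • mv (UX * UXᵀ) (mv Aff (x t) + mv Afs (y t) - b1 + ε t) :=
          Finset.sum_congr rfl (fun t _ => hstep t)
      _ = α • mv (UX * UXᵀ)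
            (∑ t ∈ Finset.range T, (mv Aff (x t) + mv Afs (y t) - b1 + ε t)) := by
          rw [← Finset.smul_sum, ← mv_sum]
      _ = _ := by
          congr 2
          rw [Finset.sum_add_distrib, Finset.sum_sub_distrib, Finset.sum_add_distrib,
            Finset.sum_const, Finset.card_range, ← mv_sum, ← mv_sum,
            Nat.cast_smul_eq_nsmul]
  set Sx := ∑ t ∈ Finset.range T, x t with hSx
  set Sy := ∑ t ∈ Finset.range T, y t with hSy
  set Sε := ∑ t ∈ Finset.range T, ε t with hSε
  set Dx := Sx - (T : ℝ) • xp with hDx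
  set Dy := Sy - (T : ℝ) • yp with hDy
  have h0 : mv (UX * UXᵀ) (mv Aff xp) + mv (UX * UXᵀ) (mv Afs yp)
      - mv (UX * UXᵀ) b1 = 0 := by
    rw [← mv_add, ← mv_sub]; exact hsolx
  have hA : α⁻¹ • (x T - x 0) - mv (UX * UXᵀ) Sε
      = mv (UX * UXᵀ) (mv Aff Dx) + mv (UX * UXᵀ) (mv Afs Dy) := by
    rw [hT0, smul_smul, inv_mul_cancel₀ hα.ne', one_smul]
    simp only [hDx, hDy, mv_add, mv_sub, mv_smul]
    linear_combination (norm := module) (T : ℝ) • h0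
  have hDxS : Dx ∈ S :=
    Submodule.sub_mem _ (Submodule.sum_mem _ fun t _ => hmem t)
      (Submodule.smul_mem _ _ hxpS)
  have hB : mv (UX * N * UXᵀ) (α⁻¹ • (x T - x 0) - mv (UX * UXᵀ) Sε)
      = Dx + mv ((UX * N * UXᵀ) * Afs) Dy := by
    rw [hA, mv_add, hkey Dx hDxS, ← mv_mul, ← mv_mul, hc1P]
  have hTne : (T : ℝ) ≠ 0 := by positivity
  have e1 : (T : ℝ)⁻¹ • Dx = (T : ℝ)⁻¹ • Sx - xp := by
    rw [hDx, smul_sub, smul_smul, inv_mul_cancel₀ hTne, one_smul]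
  have e2 : (T : ℝ)⁻¹ • Dy = (T : ℝ)⁻¹ • Sy - yp := by
    rw [hDy, smul_sub, smul_smul, inv_mul_cancel₀ hTne, one_smul]
  rw [hc1, ← e1, ← e2, hB, mv_smul, smul_add]
  abel

end TTSA
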